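/- Let 0 → A → B → C → 0, with maps f : A → B and g : B → C, be an almost split conflation in C. Then the sequence 0 → (A → 0) → (g : B → C) → (𝟙_C : C → C) → 0 in the epimorphism category F(C), whose first map is the arrow morphism (f, 0) and whose second map is the arrow morphism (g, 𝟙_C), is an almost split conflation in F(C). -/

import Mathlib

open CategoryTheory CategoryTheory.Limits

universe u

section Defs
variable {Λ : Type u} [Ring Λ]

/-- A short exact sequence `0 → X → Y → Z → 0` of Λ-modules. -/
def ShortExactSeq {X Y Z : ModuleCat.{u} Λ} (f : X ⟶ Y) (g : Y ⟶ Z) : Prop :=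
  Function.Injective f ∧ Function.Surjective g ∧ Function.Exact f g

variable (C : Set (ModuleCat.{u} Λ))

/-- An inflation of the exact category `C`: an injective map between objects of `C`
whose cokernel lies in `C`. -/
def IsInflation {X Y : ModuleCat.{u} Λ} (f : X ⟶ Y) : Prop :=
  X ∈ C ∧ Y ∈ C ∧ Function.Injective f ∧ ∃ Z ∈ C, ∃ g : Y ⟶ Z, ShortExactSeq f g

/-- A deflation of the exact category `C`: a surjective map between objects of `C`
whose kernel lies in `C`. -/
def IsDeflation {X Y : ModuleCat.{u} Λ} (f : X ⟶ Y) : Prop :=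
  X ∈ C ∧ Y ∈ C ∧ Function.Surjective f ∧ ∃ Z ∈ C, ∃ g : Z ⟶ X, ShortExactSeq g f

/-- The monomorphism category `S(C)`, as a subcategory of the arrow category. -/
def SMono : Set (Arrow (ModuleCat.{u} Λ)) := {a | IsInflation C a.hom}

/-- The epimorphism category `F(C)`, as a subcategory of the arrow category. -/
def FEpi : Set (Arrow (ModuleCat.{u} Λ)) := {a | IsDeflation C a.hom}

/-- `I` is a `C`-injective object. -/
def CInjective (I : ModuleCat.{u} Λ) : Prop :=
  I ∈ C ∧ ∀ (U V : ModuleCat.{u} Λ), U ∈ C → V ∈ C →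
    ∀ (f : I ⟶ U) (g : U ⟶ V), ShortExactSeq f g → ∃ r : U ⟶ I, f ≫ r = 𝟙 I

/-- `P` is a `C`-projective object. -/
def CProjective (P : ModuleCat.{u} Λ) : Prop :=
  P ∈ C ∧ ∀ (U V : ModuleCat.{u} Λ), U ∈ C → V ∈ C →
    ∀ (f : U ⟶ V) (g : V ⟶ P), ShortExactSeq f g → ∃ s : P ⟶ V, s ≫ g = 𝟙 P

/-- `C` has enough `C`-injectives. -/
def EnoughCInjectives : Prop :=
  ∀ X ∈ C, ∃ (I X' : ModuleCat.{u} Λ), CInjective C I ∧ X' ∈ C ∧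
    ∃ (e : X ⟶ I) (q : I ⟶ X'), ShortExactSeq e q

/-- `C` has enough `C`-projectives. -/
def EnoughCProjectives : Prop :=
  ∀ X ∈ C, ∃ (P X' : ModuleCat.{u} Λ), CProjective C P ∧ X' ∈ C ∧
    ∃ (q : X' ⟶ P) (p : P ⟶ X), ShortExactSeq q p

def ClosedUnderIso : Prop := ∀ (M N : ModuleCat.{u} Λ), (M ≅ N) → M ∈ C → N ∈ C
def ContainsZero : Prop := ∀ M : ModuleCat.{u} Λ, Subsingleton M → M ∈ C
def ClosedUnderSums : Prop := ∀ M N : ModuleCat.{u} Λ, M ∈ C → N ∈ C → (M ⊞ N) ∈ C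
def ClosedUnderExtensions : Prop :=
  ∀ (X Y Z : ModuleCat.{u} Λ) (f : X ⟶ Y) (g : Y ⟶ Z),
    X ∈ C → Z ∈ C → ShortExactSeq f g → Y ∈ C

end Defs

section Approx
variable {A : Type*} [Category A] (D : Set A)

/-- `g : Y ⟶ Z` is a right `D`-approximation of `Z`. -/
def IsRightApprox {Y Z : A} (g : Y ⟶ Z) : Prop :=
  Y ∈ D ∧ ∀ W ∈ D, ∀ u : W ⟶ Z, ∃ v : W ⟶ Y, v ≫ g = u

/-- `g : Z ⟶ Y` is a left `D`-approximation of `Z`. -/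
def IsLeftApprox {Z Y : A} (g : Z ⟶ Y) : Prop :=
  Y ∈ D ∧ ∀ W ∈ D, ∀ u : Z ⟶ W, ∃ v : Y ⟶ W, g ≫ v = u

end Approx

section Finiteness
variable {Λ : Type u} [Ring Λ]

/-- Contravariant finiteness of `C` in `mod Λ` (the finite-dimensional Λ-modules). -/
def ContravariantlyFinite (C : Set (ModuleCat.{u} Λ)) : Prop :=
  ∀ M : ModuleCat.{u} Λ, Module.Finite Λ M →
    ∃ (Y : ModuleCat.{u} Λ) (g : Y ⟶ M), IsRightApprox C g

/-- Covariant finiteness of `C` in `mod Λ`. -/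
def CovariantlyFinite (C : Set (ModuleCat.{u} Λ)) : Prop :=
  ∀ M : ModuleCat.{u} Λ, Module.Finite Λ M →
    ∃ (Y : ModuleCat.{u} Λ) (g : M ⟶ Y), IsLeftApprox C g

end Finiteness

section ArrowAS
variable {Λ : Type u} [Ring Λ]
variable (D : Set (Arrow (ModuleCat.{u} Λ)))

/-- A conflation of the full subcategory `D` of the arrow category. -/
def ArrowConflation {a b c : Arrow (ModuleCat.{u} Λ)} (φ : a ⟶ b) (ψ : b ⟶ c) : Prop :=
  a ∈ D ∧ b ∈ D ∧ c ∈ D ∧ ShortExactSeq φ.left ψ.left ∧ ShortExactSeq φ.right ψ.right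

/-- `φ : a ⟶ b` is left almost split in `D`. -/
def ArrowLeftAlmostSplit {a b : Arrow (ModuleCat.{u} Λ)} (φ : a ⟶ b) : Prop :=
  (¬ ∃ r : b ⟶ a, φ ≫ r = 𝟙 a) ∧
  ∀ b' ∈ D, ∀ u : a ⟶ b', (¬ ∃ r : b' ⟶ a, u ≫ r = 𝟙 a) → ∃ v : b ⟶ b', φ ≫ v = u

/-- `ψ : b ⟶ c` is right almost split in `D`. -/
def ArrowRightAlmostSplit {b c : Arrow (ModuleCat.{u} Λ)} (ψ : b ⟶ c) : Prop :=
  (¬ ∃ s : c ⟶ b, s ≫ ψ = 𝟙 c) ∧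
  ∀ b' ∈ D, ∀ u : b' ⟶ c, (¬ ∃ s : c ⟶ b', s ≫ u = 𝟙 c) → ∃ v : b' ⟶ b, v ≫ ψ = u

/-- An almost split conflation in `D`. -/
def ArrowAlmostSplitConflation {a b c : Arrow (ModuleCat.{u} Λ)} (φ : a ⟶ b) (ψ : b ⟶ c) :
    Prop :=
  ArrowConflation D φ ψ ∧ (¬ ∃ r : b ⟶ a, φ ≫ r = 𝟙 a) ∧
    ArrowLeftAlmostSplit D φ ∧ ArrowRightAlmostSplit D ψ

end ArrowAS

section ModAS
variable {Λ : Type u} [Ring Λ] (C : Set (ModuleCat.{u} Λ))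

/-- `f : X ⟶ Y` is left almost split in `C`. -/
def ModLeftAlmostSplit {X Y : ModuleCat.{u} Λ} (f : X ⟶ Y) : Prop :=
  (¬ ∃ r : Y ⟶ X, f ≫ r = 𝟙 X) ∧
  ∀ Y' ∈ C, ∀ u : X ⟶ Y', (¬ ∃ r : Y' ⟶ X, u ≫ r = 𝟙 X) → ∃ v : Y ⟶ Y', f ≫ v = u

/-- `g : Y ⟶ Z` is right almost split in `C`. -/
def ModRightAlmostSplit {Y Z : ModuleCat.{u} Λ} (g : Y ⟶ Z) : Prop :=
  (¬ ∃ s : Z ⟶ Y, s ≫ g = 𝟙 Z) ∧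
  ∀ Y' ∈ C, ∀ u : Y' ⟶ Z, (¬ ∃ s : Z ⟶ Y', s ≫ u = 𝟙 Z) → ∃ v : Y' ⟶ Y, v ≫ g = u

/-- An almost split conflation `0 → X → Y → Z → 0` in `C`. -/
def ModAlmostSplitSeq {X Y Z : ModuleCat.{u} Λ} (f : X ⟶ Y) (g : Y ⟶ Z) : Prop :=
  X ∈ C ∧ Y ∈ C ∧ Z ∈ C ∧ ShortExactSeq f g ∧ (¬ ∃ r : Y ⟶ X, f ≫ r = 𝟙 X) ∧
    ModLeftAlmostSplit C f ∧ ModRightAlmostSplit C g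

end ModAS

section Aux
variable {Λ : Type u} [Ring Λ]

lemma descend_of_exact {A B Z W : ModuleCat.{u} Λ} (f : A ⟶ B) (g : B ⟶ Z)
    (hg : Function.Surjective g) (hex : Function.Exact f g) (h : B ⟶ W)
    (h0 : ∀ a, h (f a) = 0) : ∃ v : Z ⟶ W, g ≫ v = h := by
  have hle : LinearMap.ker g.hom ≤ LinearMap.ker h.hom := by
    intro x hx
    obtain ⟨a, ha⟩ := (hex x).mp hx
    simpa [← ha] using h0 a
  let e := LinearMap.quotKerEquivOfSurjective g.hom hg
  refine ⟨ModuleCat.ofHom (((LinearMap.ker g.hom).liftQ h.hom hle).comp (e.symm : Z →ₗ[Λ] _)), ?_⟩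
  ext b
  have he : e (Submodule.Quotient.mk b) = g b := rfl
  have hsy : e.symm (g b) = Submodule.Quotient.mk b := by
    rw [← he, e.symm_apply_apply]
  show ((LinearMap.ker g.hom).liftQ h.hom hle) (e.symm (g b)) = h b
  rw [hsy]
  rfl

end Aux

/-- **Statement 16.** If `0 → A →f B →g Z → 0` is an almost split conflation in `C`, then
`0 → (A → 0) → (g : B → Z) → (𝟙_Z) → 0` is an almost split conflation in `F(C)`. -/
theorem almost_split_fepi_ending_at_identity
    (k : Type u) [Field k] (Λ : Type u) [Ring Λ] [Algebra k Λ] [FiniteDimensional k Λ]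
    (C : Set (ModuleCat.{u} Λ))
    (hCfd : ∀ M ∈ C, Module.Finite Λ M)
    (hC0 : ContainsZero C) (hCiso : ClosedUnderIso C)
    (hCsum : ClosedUnderSums C) (hCext : ClosedUnderExtensions C)
    {A B Z : ModuleCat.{u} Λ} (f : A ⟶ B) (g : B ⟶ Z)
    (h : ModAlmostSplitSeq C f g) :
    ArrowAlmostSplitConflation (FEpi C)
      (a := Arrow.mk (0 : A ⟶ ModuleCat.of Λ PUnit.{u+1}))
      (b := Arrow.mk g) (c := Arrow.mk (𝟙 Z))
      (Arrow.homMk (u := f) (v := 0)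
        (by
          have hex : Function.Exact f g := h.2.2.2.1.2.2
          have hfg : f ≫ g = 0 := by
            ext x
            simpa using hex.apply_apply_eq_zero x
          simp [hfg]))
      (Arrow.homMk (u := g) (v := 𝟙 Z) (by simp)) := by
  classical
  obtain ⟨hA, hB, hZ, ⟨hfinj, hgsurj, hfg⟩, hns, ⟨hlns, hlas⟩, ⟨hrns, hras⟩⟩ := h
  haveI : Subsingleton (ModuleCat.of Λ PUnit.{u+1}) := inferInstanceAs (Subsingleton PUnit)
  have hPmem : ModuleCat.of Λ PUnit.{u+1} ∈ C := hC0 _ inferInstance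
  have homToP : ∀ (X : ModuleCat.{u} Λ) (u₁ u₂ : X ⟶ ModuleCat.of Λ PUnit.{u+1}), u₁ = u₂ := by
    intro X u₁ u₂; ext x
  have homFromP : ∀ (X : ModuleCat.{u} Λ) (u₁ u₂ : ModuleCat.of Λ PUnit.{u+1} ⟶ X), u₁ = u₂ := by
    intro X u₁ u₂; ext x; rw [Subsingleton.elim x 0, map_zero, map_zero]
  have hex01 : Function.Exact (0 : ModuleCat.of Λ PUnit.{u+1} ⟶ Z) (𝟙 Z) := by
    intro y
    constructor
    · intro hy
      refine ⟨0, ?_⟩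
      have : (𝟙 Z : Z ⟶ Z) y = y := rfl
      rw [this] at hy
      simpa using hy.symm
    · rintro ⟨x, rfl⟩
      rfl
  -- the non-split claim for φ
  have hnsφ : ¬ ∃ r : Arrow.mk g ⟶ Arrow.mk (0 : A ⟶ ModuleCat.of Λ PUnit.{u+1}),
      (Arrow.homMk (u := f) (v := 0) (by
        have hex : Function.Exact f g := hfg
        have hfg' : f ≫ g = 0 := by
          ext x
          simpa using hex.apply_apply_eq_zero x
        simp [hfg'])) ≫ r = 𝟙 (Arrow.mk (0 : A ⟶ ModuleCat.of Λ PUnit.{u+1})) := by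
    rintro ⟨r, hr⟩
    apply hns
    have hl := congrArg CommaMorphism.left hr
    erw [Comma.comp_left] at hl
    exact ⟨r.left, hl⟩
  refine ⟨⟨?_, ?_, ?_, ⟨hfinj, hgsurj, hfg⟩, ?_⟩, hnsφ, ⟨hnsφ, ?_⟩, ⟨?_, ?_⟩⟩
  · -- a ∈ FEpi C
    show IsDeflation C (0 : A ⟶ ModuleCat.of Λ PUnit.{u+1})
    refine ⟨hA, hPmem, fun y => ⟨0, Subsingleton.elim _ _⟩,
      A, hA, 𝟙 A, fun x y hxy => hxy, fun y => ⟨0, Subsingleton.elim _ _⟩, ?_⟩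
    intro y
    exact ⟨fun _ => ⟨y, rfl⟩, fun _ => Subsingleton.elim _ _⟩
  · -- b ∈ FEpi C
    show IsDeflation C g
    exact ⟨hB, hZ, hgsurj, A, hA, f, hfinj, hgsurj, hfg⟩
  · -- c ∈ FEpi C
    show IsDeflation C (𝟙 Z)
    refine ⟨hZ, hZ, fun z => ⟨z, rfl⟩, ModuleCat.of Λ PUnit.{u+1}, hPmem, 0,
      fun x y _ => Subsingleton.elim x y, fun z => ⟨z, rfl⟩, hex01⟩
  · -- right component SES
    show ShortExactSeq (0 : ModuleCat.of Λ PUnit.{u+1} ⟶ Z) (𝟙 Z)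
    exact ⟨fun x y _ => Subsingleton.elim x y, fun z => ⟨z, rfl⟩, hex01⟩
  · -- φ is left almost split : main condition
    intro b' hb' u hu
    obtain ⟨hX', hY', hpsurj, K, hK, i, hises⟩ := hb'
    -- u.left is not a split mono
    have huns : ¬ ∃ r : b'.left ⟶ A, u.left ≫ r = 𝟙 A := by
      rintro ⟨r, hrl⟩
      apply hu
      refine ⟨CommaMorphism.mk r 0 (homToP _ _ _), ?_⟩
      apply CommaMorphism.ext
      · erw [Comma.comp_left]; exact hrl
      · exact homFromP _ _ _
    obtain ⟨v₁, hv₁⟩ := hlas b'.left hX' u.left huns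
    have h0 : ∀ a₀ : A, (v₁ ≫ b'.hom) (f a₀) = 0 := by
      intro a₀
      have h1 : v₁ (f a₀) = u.left a₀ := ConcreteCategory.congr_hom hv₁ a₀
      have h2 : b'.hom (u.left a₀) =
          u.right ((0 : A ⟶ ModuleCat.of Λ PUnit.{u+1}) a₀) :=
        (ConcreteCategory.congr_hom u.w a₀)
      show b'.hom (v₁ (f a₀)) = 0
      rw [h1, h2]
      have : (0 : A ⟶ ModuleCat.of Λ PUnit.{u+1}) a₀ = 0 := rfl
      rw [this, map_zero]
    obtain ⟨v₂, hv₂⟩ := descend_of_exact f g hgsurj hfg (v₁ ≫ b'.hom) h0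
    refine ⟨CommaMorphism.mk v₁ v₂ hv₂.symm, ?_⟩
    apply CommaMorphism.ext
    · erw [Comma.comp_left]; exact hv₁
    · exact homFromP _ _ _
  · -- ψ is not a split epi
    rintro ⟨s, hs⟩
    apply hrns
    have hl := congrArg CommaMorphism.left hs
    erw [Comma.comp_left] at hl
    exact ⟨s.left, hl⟩
  · -- ψ is right almost split : main condition
    intro b' hb' u hu
    obtain ⟨hX', hY', hpsurj, K, hK, i, hises⟩ := hb'
    have huw : u.left = b'.hom ≫ u.right := by
      have := u.w
      change u.left ≫ 𝟙 Z = _ at this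
      simpa using this
    have huns : ¬ ∃ t : Z ⟶ b'.left, t ≫ u.left = 𝟙 Z := by
      rintro ⟨t, ht⟩
      apply hu
      refine ⟨CommaMorphism.mk t (t ≫ b'.hom) (by simp), ?_⟩
      apply CommaMorphism.ext
      · erw [Comma.comp_left]; exact ht
      · erw [Comma.comp_right]
        show (t ≫ b'.hom) ≫ u.right = 𝟙 Z
        rw [Category.assoc, ← huw]
        exact ht
    obtain ⟨v₁, hv₁⟩ := hras b'.left hX' u.left huns
    refine ⟨CommaMorphism.mk v₁ u.right (show v₁ ≫ g = b'.hom ≫ u.right by rw [hv₁, huw]), ?_⟩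
    apply CommaMorphism.ext
    · erw [Comma.comp_left]; exact hv₁
    · erw [Comma.comp_right]
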